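/- Let (X, μ) be a measure space, B ⊆ X measurable with 0 < μ(B) < ∞, and υ : B → ℝ measurable with 0 ≤ υ ≤ L, L > 0. Suppose μ({x ∈ B : υ = 0}) ≥ θ·μ(B) with θ ∈ (0, 1]. Then μ({x ∈ B : υ(x) = L})·L ≤ (1/θ)·∫_B |υ − ῡ| dμ, where ῡ := (1/μ(B))·∫_B υ dμ is the average of υ over B. -/

import Mathlib

open MeasureTheory

theorem level_set_estimate_from_oscillation
    {X : Type*} [MeasurableSpace X] (μ : Measure X)
    (B : Set X) (hB : MeasurableSet B) (hB₀ : 0 < μ B) (hB₁ : μ B < ⊤)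
    (υ : X → ℝ) (hmeas : Measurable υ)
    (L : ℝ) (hL : 0 < L)
    (h₀ : ∀ x ∈ B, 0 ≤ υ x) (h₁ : ∀ x ∈ B, υ x ≤ L)
    (θ : ℝ) (hθ₀ : 0 < θ) (hθ₁ : θ ≤ 1)
    (hdens : ENNReal.ofReal θ * μ B ≤ μ {x ∈ B | υ x = 0}) :
    (μ {x ∈ B | υ x = L}).toReal * L ≤
      (1 / θ) * ∫ x in B, |υ x - (1 / (μ B).toReal) * ∫ y in B, υ y ∂μ| ∂μ := by
  set a := (1 / (μ B).toReal) * ∫ y in B, υ y ∂μ with ha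
  have hBne : μ B ≠ ⊤ := hB₁.ne
  have hBpos : 0 < (μ B).toReal := ENNReal.toReal_pos hB₀.ne' hBne
  set Z := {x ∈ B | υ x = 0} with hZdef
  set S := {x ∈ B | υ x = L} with hSdef
  have hZm : MeasurableSet Z := hB.inter (hmeas (measurableSet_singleton 0))
  have hSm : MeasurableSet S := hB.inter (hmeas (measurableSet_singleton L))
  have hZB : Z ⊆ B := fun x hx => hx.1
  have hSB : S ⊆ B := fun x hx => hx.1
  have hZfin : μ Z ≠ ⊤ := ((measure_mono hZB).trans_lt hB₁).ne
  -- integrability of υ on B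
  have hint : IntegrableOn υ B μ := by
    apply Measure.integrableOn_of_bounded hBne hmeas.aestronglyMeasurable (M := L)
    filter_upwards [ae_restrict_mem hB] with x hx
    rw [Real.norm_eq_abs, abs_le]
    exact ⟨by linarith [h₀ x hx], h₁ x hx⟩
  -- lower bound on μ Z
  have hZlow : θ * (μ B).toReal ≤ (μ Z).toReal := by
    have h := ENNReal.toReal_mono hZfin hdens
    rwa [ENNReal.toReal_mul, ENNReal.toReal_ofReal hθ₀.le] at h
  have hZle : (μ Z).toReal ≤ (μ B).toReal :=
    ENNReal.toReal_mono hBne (measure_mono hZB)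
  -- split the integral
  have hsplit : ∫ x in B, υ x ∂μ = ∫ x in B \ Z, υ x ∂μ + ∫ x in Z, υ x ∂μ := by
    rw [← setIntegral_union Set.disjoint_sdiff_left hZm
      (hint.mono_set Set.diff_subset) (hint.mono_set hZB),
      Set.diff_union_of_subset hZB]
  have hZint : ∫ x in Z, υ x ∂μ = 0 := by
    rw [setIntegral_congr_fun hZm (g := fun _ => (0:ℝ)) (fun x hx => hx.2)]
    simp
  have hdiffmeas : (μ (B \ Z)).toReal = (μ B).toReal - (μ Z).toReal := by
    rw [measure_diff hZB hZm.nullMeasurableSet hZfin,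
      ENNReal.toReal_sub_of_le (measure_mono hZB) hBne]
  have hIb : ∫ x in B, υ x ∂μ ≤ L * ((μ B).toReal - (μ Z).toReal) := by
    rw [hsplit, hZint, add_zero, ← hdiffmeas]
    calc ∫ x in B \ Z, υ x ∂μ ≤ ∫ _x in B \ Z, L ∂μ := by
          apply setIntegral_mono_on (hint.mono_set Set.diff_subset)
            (integrableOn_const ((measure_mono Set.diff_subset).trans_lt hB₁).ne)
            (hB.diff hZm)
          exact fun x hx => h₁ x hx.1
      _ = (μ (B \ Z)).toReal * L := by rw [setIntegral_const, smul_eq_mul, measureReal_def]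
      _ = L * (μ (B \ Z)).toReal := by ring
  have hInn : 0 ≤ ∫ x in B, υ x ∂μ := setIntegral_nonneg hB h₀
  have haub : a ≤ (1 - θ) * L := by
    rw [ha, one_div]
    rw [inv_mul_le_iff₀ hBpos]
    calc ∫ y in B, υ y ∂μ ≤ L * ((μ B).toReal - (μ Z).toReal) := hIb
      _ ≤ L * ((μ B).toReal - θ * (μ B).toReal) := by nlinarith
      _ = (μ B).toReal * ((1 - θ) * L) := by ring
  have hann : 0 ≤ a := mul_nonneg (by positivity) hInn
  have hLa : θ * L ≤ L - a := by nlinarith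
  -- integrability of the oscillation
  have hintabs : IntegrableOn (fun x => |υ x - a|) B μ :=
    (hint.sub (integrableOn_const hB₁.ne)).abs
  -- integral over S
  have hSint : ∫ x in S, |υ x - a| ∂μ = (μ S).toReal * (L - a) := by
    rw [setIntegral_congr_fun hSm (g := fun _ => L - a)
      (fun x hx => by rw [hx.2, abs_of_nonneg (by nlinarith)]),
      setIntegral_const, smul_eq_mul, measureReal_def]
  have hmono : ∫ x in S, |υ x - a| ∂μ ≤ ∫ x in B, |υ x - a| ∂μ := by
    apply setIntegral_mono_set hintabs
    · filter_upwards with x using abs_nonneg _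
    · exact Filter.Eventually.of_forall hSB
  have hSnn : 0 ≤ (μ S).toReal := ENNReal.toReal_nonneg
  have key : θ * ((μ S).toReal * L) ≤ ∫ x in B, |υ x - a| ∂μ := by
    nlinarith [hSint, hmono]
  rw [one_div, ← div_eq_inv_mul, le_div_iff₀ hθ₀]
  linarith
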